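/- Let D be a difference scheme D(N, M, d) and let B be a mixed orthogonal array MOA(N, m, p₁¹p₂¹⋯p_m¹, 2) (B has N rows). Let A = [A₁, A₂] be the dN × (M+1) array whose row indexed by (i, g) ∈ {1,…,N} × ℤ_d has first entry the symbol i (from an N-letter alphabet) and remaining entries D(i,1)+g, …, D(i,M)+g. If MD(A) = 3 and MD(B) ≥ 1, then there exists an irredundant mixed orthogonal array IrMOA(dN, M+m, d^M p₁¹p₂¹⋯p_m¹, 2). -/

import Mathlib

open Finset

/-- The Hamming distance between two rows of an array: the number of columns
in which the rows differ. -/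
def hamDist {ι κ : Type*} [Fintype κ] (A : ι → κ → ℕ) (i i' : ι) : ℕ :=
  (Finset.univ.filter fun j => A i j ≠ A i' j).card

/-- `MD(A)`: the minimum Hamming distance over all pairs of distinct rows. -/
noncomputable def minDist {ι κ : Type*} [Fintype κ] (A : ι → κ → ℕ) : ℕ :=
  sInf {n | ∃ i i', i ≠ i' ∧ hamDist A i i' = n}

/-- `A` is a mixed orthogonal array of strength `k` (rows indexed by `ι`,
columns by `κ`, column `j` taking values in `{0, …, lv j − 1}`): in the
subarray given by any choice of at most `k` columns, every tuple of symbols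
occurs equally often as a row, namely (number of rows)/(product of the levels
of the chosen columns) times. -/
def IsMOA {ι κ : Type*} [Fintype ι] [Fintype κ] [DecidableEq κ]
    (A : ι → κ → ℕ) (lv : κ → ℕ) (k : ℕ) : Prop :=
  (∀ i j, A i j < lv j) ∧
  ∀ S : Finset κ, S.card ≤ k → ∀ x : κ → ℕ, (∀ j ∈ S, x j < lv j) →
    (Finset.univ.filter fun i : ι => ∀ j ∈ S, A i j = x j).card * ∏ j ∈ S, lv j
      = Fintype.card ι

/-- An irredundant mixed orthogonal array of strength `k`: an MOA of strength
`k` any two distinct rows of which have Hamming distance at least `k+1`. -/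
def IsIrMOA {ι κ : Type*} [Fintype ι] [Fintype κ] [DecidableEq κ]
    (A : ι → κ → ℕ) (lv : κ → ℕ) (k : ℕ) : Prop :=
  IsMOA A lv k ∧ ∀ i i' : ι, i ≠ i' → k + 1 ≤ hamDist A i i'

/-- A difference scheme `D(r, c, d)`: an `r × c` matrix over `ℤ_d` such that
for any two distinct columns the `r` differences of corresponding entries
take each value of `ℤ_d` exactly `r/d` times. -/
def IsDiffScheme {r c d : ℕ} (B : Fin r → Fin c → ZMod d) : Prop :=
  ∀ j j' : Fin c, j ≠ j' → ∀ g : ZMod d,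
    (Finset.univ.filter fun i : Fin r => B i j - B i j' = g).card * d = r


section Aux

open Finset Sum

lemma aux_count_fst {N d : ℕ} [NeZero d] (P : Fin N → Prop) [DecidablePred P] :
    (Finset.univ.filter fun p : Fin N × ZMod d => P p.1).card
      = (Finset.univ.filter P).card * d := by
  have h : (Finset.univ.filter fun p : Fin N × ZMod d => P p.1)
      = (Finset.univ.filter P) ×ˢ (Finset.univ : Finset (ZMod d)) := by
    ext p
    simp [Finset.mem_product]
  rw [h, Finset.card_product, Finset.card_univ, ZMod.card]

lemma aux_count_graph {N d : ℕ} [NeZero d] (P : Fin N → Prop) [DecidablePred P]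
    (f : Fin N → ZMod d) :
    (Finset.univ.filter fun p : Fin N × ZMod d => P p.1 ∧ p.2 = f p.1).card
      = (Finset.univ.filter P).card := by
  classical
  refine Finset.card_bij (fun (p : Fin N × ZMod d) (_ : p ∈ Finset.univ.filter
    fun p : Fin N × ZMod d => P p.1 ∧ p.2 = f p.1) => p.1) ?_ ?_ ?_
  · rintro ⟨i, g⟩ h
    simp only [Finset.mem_filter, Finset.mem_univ, true_and] at h ⊢
    exact h.1
  · rintro ⟨i, g⟩ hi ⟨i', g'⟩ hi' h
    simp only [Finset.mem_filter, Finset.mem_univ, true_and] at hi hi'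
    dsimp at h
    subst h
    rw [Prod.mk.injEq]
    exact ⟨rfl, by rw [hi.2, hi'.2]⟩
  · intro i hi
    simp only [Finset.mem_filter, Finset.mem_univ, true_and] at hi
    exact ⟨(i, f i), by simp [hi], rfl⟩

lemma aux_card_filter_sum {α β : Type*} [Fintype α] [Fintype β]
    (P : α ⊕ β → Prop) [DecidablePred P] :
    (univ.filter P).card
      = (univ.filter fun a => P (Sum.inl a)).card
        + (univ.filter fun b => P (Sum.inr b)).card := by
  classical
  rw [← card_toLeft_add_card_toRight (u := univ.filter P)]
  congr 1
  · congr 1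
    ext a
    simp
  · congr 1
    ext b
    simp

lemma aux_val_eq_iff {d : ℕ} [NeZero d] (a : ZMod d) {v : ℕ} (hv : v < d) :
    a.val = v ↔ a = (v : ZMod d) := by
  constructor
  · intro h
    apply ZMod.val_injective
    rw [ZMod.val_cast_of_lt hv, h]
  · rintro rfl
    exact ZMod.val_cast_of_lt hv

end Aux

/-- Let `D` be a difference scheme `D(N, M, d)` and `B` an
`MOA(N, m, p₁¹⋯p_m¹, 2)`. Let `A = [A₁, A₂]` be the `dN × (M+1)` array whose
row indexed by `(i, g) ∈ Fin N × ℤ_d` has first entry the symbol `i` and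
remaining entries `D(i,j) + g`. If `MD(A) = 3` and `MD(B) ≥ 1`, then there
exists an irredundant mixed orthogonal array
`IrMOA(dN, M+m, d^M p₁¹⋯p_m¹, 2)`. -/
theorem statement16 {N M m d : ℕ} [NeZero d]
    (D : Fin N → Fin M → ZMod d) (hD : IsDiffScheme D)
    (plv : Fin m → ℕ) (B : Fin N → Fin m → ℕ) (hB : IsMOA B plv 2)
    (hMDA : minDist
        (fun p : Fin N × ZMod d =>
          Sum.elim (fun _ : Unit => (p.1 : ℕ)) fun j : Fin M => (D p.1 j + p.2).val)
      = 3)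
    (hMDB : 1 ≤ minDist B) :
    ∃ C : Fin N × ZMod d → (Fin M ⊕ Fin m) → ℕ,
      IsIrMOA C (Sum.elim (fun _ => d) plv) 2 := by
  classical
  set A : Fin N × ZMod d → (Unit ⊕ Fin M) → ℕ := fun p =>
    Sum.elim (fun _ : Unit => (p.1 : ℕ)) fun j : Fin M => (D p.1 j + p.2).val with hA
  have hcard : Fintype.card (Fin N × ZMod d) = N * d := by
    simp [ZMod.card]
  refine ⟨fun p => Sum.elim (fun j => (D p.1 j + p.2).val) (fun j => B p.1 j), ⟨?_, ?_⟩, ?_⟩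
  · rintro ⟨i, g⟩ (j | j)
    · exact ZMod.val_lt _
    · exact hB.1 i j
  · intro S hS x hx
    rw [hcard]
    obtain h0 | h1 | h2 : S.card = 0 ∨ S.card = 1 ∨ S.card = 2 := by omega
    · obtain rfl : S = ∅ := Finset.card_eq_zero.mp h0
      simp [hcard]
    · obtain ⟨a, rfl⟩ := Finset.card_eq_one.mp h1
      obtain (j | j) := a
      · -- single left column
        have hv : x (Sum.inl j) < d := hx _ (Finset.mem_singleton_self _)
        have hcond : (Finset.univ.filter fun p : Fin N × ZMod d =>
            ∀ j' ∈ ({Sum.inl j} : Finset (Fin M ⊕ Fin m)),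
              Sum.elim (fun j => (D p.1 j + p.2).val) (fun j => B p.1 j) j' = x j').card
            = (Finset.univ.filter fun _ : Fin N => True).card := by
          rw [← aux_count_graph (fun _ : Fin N => True)
            (fun i => (x (Sum.inl j) : ZMod d) - D i j)]
          congr 1
          ext ⟨i, g⟩
          simp only [Finset.mem_filter, Finset.mem_univ, true_and, Finset.mem_singleton,
            forall_eq, Sum.elim_inl]
          rw [aux_val_eq_iff _ hv]
          constructor
          · intro h; rw [← h]; ring
          · intro h; rw [h]; ring
        rw [hcond]
        simp [mul_comm]
      · -- single right column
        have hcond : (Finset.univ.filter fun p : Fin N × ZMod d =>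
            ∀ j' ∈ ({Sum.inr j} : Finset (Fin M ⊕ Fin m)),
              Sum.elim (fun j => (D p.1 j + p.2).val) (fun j => B p.1 j) j' = x j').card
            = (Finset.univ.filter fun i : Fin N => B i j = x (Sum.inr j)).card * d := by
          rw [← aux_count_fst]
          congr 1
          ext ⟨i, g⟩
          simp
        rw [hcond]
        have hBc := hB.2 {j} (by simp) (fun j' => x (Sum.inr j'))
          (by intro j' hj'; simp only [Finset.mem_singleton] at hj'; subst hj';
              exact hx _ (Finset.mem_singleton_self _))
        simp only [Finset.prod_singleton, Fintype.card_fin, Finset.mem_singleton, forall_eq] at hBc ⊢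
        simp only [Sum.elim_inr]
        calc (Finset.univ.filter fun i : Fin N => B i j = x (Sum.inr j)).card * d * plv j
            = (Finset.univ.filter fun i : Fin N => B i j = x (Sum.inr j)).card * plv j * d := by
              ring
          _ = N * d := by rw [hBc]
    · obtain ⟨a, b, hab, rfl⟩ := Finset.card_eq_two.mp h2
      have hxa : x a < Sum.elim (fun _ => d) plv a := hx _ (by simp)
      have hxb : x b < Sum.elim (fun _ => d) plv b := hx _ (by simp)
      have hmem : ∀ (p : Fin N × ZMod d),
          (∀ j' ∈ ({a, b} : Finset (Fin M ⊕ Fin m)),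
            Sum.elim (fun j => (D p.1 j + p.2).val) (fun j => B p.1 j) j' = x j')
          ↔ (Sum.elim (fun j => (D p.1 j + p.2).val) (fun j => B p.1 j) a = x a ∧
             Sum.elim (fun j => (D p.1 j + p.2).val) (fun j => B p.1 j) b = x b) := by
        intro p
        simp [Finset.forall_mem_insert]
      rw [Finset.prod_pair hab]
      obtain (j | j) := a <;> obtain (j' | j') := b
      · -- left, left
        have hjj' : j ≠ j' := by rintro rfl; exact hab rfl
        simp only [Sum.elim_inl] at hxa hxb
        have hcond : (Finset.univ.filter fun p : Fin N × ZMod d =>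
            ∀ jj ∈ ({Sum.inl j, Sum.inl j'} : Finset (Fin M ⊕ Fin m)),
              Sum.elim (fun j => (D p.1 j + p.2).val) (fun j => B p.1 j) jj = x jj).card
            = (Finset.univ.filter fun i : Fin N =>
                D i j - D i j' = (x (Sum.inl j) : ZMod d) - (x (Sum.inl j') : ZMod d)).card := by
          rw [← aux_count_graph _ (fun i => (x (Sum.inl j) : ZMod d) - D i j)]
          congr 1
          ext ⟨i, g⟩
          simp only [Finset.mem_filter, Finset.mem_univ, true_and]
          rw [hmem (i, g)]
          simp only [Sum.elim_inl]
          rw [aux_val_eq_iff _ hxa, aux_val_eq_iff _ hxb]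
          constructor
          · rintro ⟨h1, h2⟩
            constructor
            · rw [← h1, ← h2]; ring
            · rw [← h1]; ring
          · rintro ⟨h1, h2⟩
            constructor
            · rw [h2]; ring
            · rw [h2]
              have : D i j' = D i j - ((x (Sum.inl j) : ZMod d) - (x (Sum.inl j') : ZMod d)) := by
                rw [← h1]; ring
              rw [this]; ring
        rw [hcond, Sum.elim_inl, Sum.elim_inl, ← mul_assoc,
          hD j j' hjj' ((x (Sum.inl j) : ZMod d) - (x (Sum.inl j') : ZMod d))]
      · -- left, right
        simp only [Sum.elim_inl] at hxa
        have hcond : (Finset.univ.filter fun p : Fin N × ZMod d =>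
            ∀ jj ∈ ({Sum.inl j, Sum.inr j'} : Finset (Fin M ⊕ Fin m)),
              Sum.elim (fun j => (D p.1 j + p.2).val) (fun j => B p.1 j) jj = x jj).card
            = (Finset.univ.filter fun i : Fin N => B i j' = x (Sum.inr j')).card := by
          rw [← aux_count_graph _ (fun i => (x (Sum.inl j) : ZMod d) - D i j)]
          congr 1
          ext ⟨i, g⟩
          simp only [Finset.mem_filter, Finset.mem_univ, true_and]
          rw [hmem (i, g)]
          simp only [Sum.elim_inl, Sum.elim_inr]
          rw [aux_val_eq_iff _ hxa]
          constructor
          · rintro ⟨h1, h2⟩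
            exact ⟨h2, by rw [← h1]; ring⟩
          · rintro ⟨h1, h2⟩
            exact ⟨by rw [h2]; ring, h1⟩
        rw [hcond]
        have hBc := hB.2 {j'} (by simp) (fun jj => x (Sum.inr jj))
          (by intro jj hjj; simp only [Finset.mem_singleton] at hjj; subst hjj;
              simpa using hxb)
        simp only [Finset.prod_singleton, Fintype.card_fin, Finset.mem_singleton, forall_eq] at hBc
        rw [Sum.elim_inl, Sum.elim_inr]
        calc (Finset.univ.filter fun i : Fin N => B i j' = x (Sum.inr j')).card * (d * plv j')
            = (Finset.univ.filter fun i : Fin N => B i j' = x (Sum.inr j')).card * plv j' * d := by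
              ring
          _ = N * d := by rw [hBc]
      · -- right, left
        simp only [Sum.elim_inl] at hxb
        have hcond : (Finset.univ.filter fun p : Fin N × ZMod d =>
            ∀ jj ∈ ({Sum.inr j, Sum.inl j'} : Finset (Fin M ⊕ Fin m)),
              Sum.elim (fun j => (D p.1 j + p.2).val) (fun j => B p.1 j) jj = x jj).card
            = (Finset.univ.filter fun i : Fin N => B i j = x (Sum.inr j)).card := by
          rw [← aux_count_graph _ (fun i => (x (Sum.inl j') : ZMod d) - D i j')]
          congr 1
          ext ⟨i, g⟩
          simp only [Finset.mem_filter, Finset.mem_univ, true_and]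
          rw [hmem (i, g)]
          simp only [Sum.elim_inl, Sum.elim_inr]
          rw [aux_val_eq_iff _ hxb]
          constructor
          · rintro ⟨h1, h2⟩
            exact ⟨h1, by rw [← h2]; ring⟩
          · rintro ⟨h1, h2⟩
            exact ⟨h1, by rw [h2]; ring⟩
        rw [hcond]
        have hBc := hB.2 {j} (by simp) (fun jj => x (Sum.inr jj))
          (by intro jj hjj; simp only [Finset.mem_singleton] at hjj; subst hjj;
              simpa using hxa)
        simp only [Finset.prod_singleton, Fintype.card_fin, Finset.mem_singleton, forall_eq] at hBc
        rw [Sum.elim_inr, Sum.elim_inl]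
        calc (Finset.univ.filter fun i : Fin N => B i j = x (Sum.inr j)).card * (plv j * d)
            = (Finset.univ.filter fun i : Fin N => B i j = x (Sum.inr j)).card * plv j * d := by
              ring
          _ = N * d := by rw [hBc]
      · -- right, right
        have hjj' : j ≠ j' := by rintro rfl; exact hab rfl
        have hcond : (Finset.univ.filter fun p : Fin N × ZMod d =>
            ∀ jj ∈ ({Sum.inr j, Sum.inr j'} : Finset (Fin M ⊕ Fin m)),
              Sum.elim (fun j => (D p.1 j + p.2).val) (fun j => B p.1 j) jj = x jj).card
            = (Finset.univ.filter fun i : Fin N =>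
                B i j = x (Sum.inr j) ∧ B i j' = x (Sum.inr j')).card * d := by
          rw [← aux_count_fst]
          congr 1
          ext ⟨i, g⟩
          simp only [Finset.mem_filter, Finset.mem_univ, true_and]
          rw [hmem (i, g)]
          simp
        rw [hcond]
        have hBc := hB.2 {j, j'} (by rw [Finset.card_pair hjj'])
          (fun jj => x (Sum.inr jj))
          (by intro jj hjj
              simp only [Finset.mem_insert, Finset.mem_singleton] at hjj
              rcases hjj with rfl | rfl
              · simpa using hxa
              · simpa using hxb)
        rw [Finset.prod_pair hjj'] at hBc
        rw [Fintype.card_fin] at hBc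
        simp only [Finset.mem_insert, Finset.mem_singleton, forall_eq_or_imp, forall_eq] at hBc
        have hBc' : (Finset.univ.filter fun i : Fin N =>
            B i j = x (Sum.inr j) ∧ B i j' = x (Sum.inr j')).card * (plv j * plv j') = N := hBc
        rw [Sum.elim_inr, Sum.elim_inr]
        calc (Finset.univ.filter fun i : Fin N =>
              B i j = x (Sum.inr j) ∧ B i j' = x (Sum.inr j')).card * d * (plv j * plv j')
            = (Finset.univ.filter fun i : Fin N =>
              B i j = x (Sum.inr j) ∧ B i j' = x (Sum.inr j')).card * (plv j * plv j') * d := by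
              ring
          _ = N * d := by rw [hBc']
  · -- minimum distance
    intro p p' hpp'
    have hAd : 3 ≤ hamDist A p p' := by
      rw [← hMDA]
      exact Nat.sInf_le ⟨p, p', hpp', rfl⟩
    have hAsplit : hamDist A p p'
        = (Finset.univ.filter fun _ : Unit => (p.1 : ℕ) ≠ (p'.1 : ℕ)).card
          + (Finset.univ.filter fun j : Fin M =>
              (D p.1 j + p.2).val ≠ (D p'.1 j + p'.2).val).card := by
      unfold hamDist
      rw [aux_card_filter_sum]
      simp [hA]
    have hCsplit : hamDist
        (fun p : Fin N × ZMod d =>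
          Sum.elim (fun j => (D p.1 j + p.2).val) (fun j => B p.1 j)) p p'
        = (Finset.univ.filter fun j : Fin M =>
            (D p.1 j + p.2).val ≠ (D p'.1 j + p'.2).val).card
          + hamDist B p.1 p'.1 := by
      unfold hamDist
      rw [aux_card_filter_sum]
      simp
      congr
    rw [hCsplit]
    by_cases h1 : p.1 = p'.1
    · have hU : (Finset.univ.filter fun _ : Unit => (p.1 : ℕ) ≠ (p'.1 : ℕ)).card = 0 := by
        simp [h1]
      omega
    · have hU : (Finset.univ.filter fun _ : Unit => (p.1 : ℕ) ≠ (p'.1 : ℕ)).card = 1 := by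
        have : (p.1 : ℕ) ≠ (p'.1 : ℕ) := fun h => h1 (Fin.val_injective h)
        simp [this]
      have hBd : 1 ≤ hamDist B p.1 p'.1 := by
        calc 1 ≤ minDist B := hMDB
          _ ≤ hamDist B p.1 p'.1 := Nat.sInf_le ⟨p.1, p'.1, h1, rfl⟩
      omega
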